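/- For every positive integer p, there exists a finite collection of triples (v_i, a_i, d_i) ∈ ℝ³ with a_i ≤ d_i (a dynamic point set, where point v_i is present on the real line during the time interval [a_i, d_i)) such that for every 2-coloring of the collection, there exists a time t and p points present at time t that are consecutive (in the order of their values v_i among all points present at time t) and all of the same color. -/

import Mathlib

/-- The set of triples of a dynamic point set present at time `t`:
the point `v = s.1` appears at `a = s.2.1` and disappears at `d = s.2.2`,
and is present for `t ∈ [a, d)`. -/
noncomputable def Present (S : Finset (ℝ × ℝ × ℝ)) (t : ℝ) : Finset (ℝ × ℝ × ℝ) :=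
  S.filter (fun s => s.2.1 ≤ t ∧ t < s.2.2)

/-- `C` is a set of consecutive points among `T`, in the order of their values
(first coordinates). -/
def ConsecIn (T C : Finset (ℝ × ℝ × ℝ)) : Prop :=
  C ⊆ T ∧ ∀ p ∈ C, ∀ q ∈ C, ∀ r ∈ T, p.1 ≤ r.1 → r.1 ≤ q.1 → r ∈ C

namespace DynAux

abbrev Pt := ℝ × ℝ × ℝ

lemma mem_Present {S : Finset Pt} {t : ℝ} {s : Pt} :
    s ∈ Present S t ↔ s ∈ S ∧ (s.2.1 ≤ t ∧ t < s.2.2) := by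
  simp [Present]

lemma Present_subset (S : Finset Pt) (t : ℝ) : Present S t ⊆ S :=
  Finset.filter_subset _ _

lemma Present_union (S₁ S₂ : Finset Pt) (t : ℝ) :
    Present (S₁ ∪ S₂) t = Present S₁ t ∪ Present S₂ t :=
  Finset.filter_union _ _ _

lemma Present_insert_alive {x : Pt} {t : ℝ} (S : Finset Pt)
    (h₁ : x.2.1 ≤ t) (h₂ : t < x.2.2) :
    Present (insert x S) t = insert x (Present S t) := by
  unfold Present
  rw [Finset.filter_insert, if_pos ⟨h₁, h₂⟩]

lemma Present_insert_dead {x : Pt} {t : ℝ} (S : Finset Pt)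
    (h : ¬ (x.2.1 ≤ t ∧ t < x.2.2)) :
    Present (insert x S) t = Present S t := by
  unfold Present
  rw [Finset.filter_insert, if_neg h]

lemma Present_empty_early {S : Finset Pt} {σ' t : ℝ}
    (hS : ∀ s ∈ S, σ' ≤ s.2.1) (ht : t < σ') : Present S t = ∅ := by
  apply Finset.filter_eq_empty_iff.mpr
  intro s hs hc
  have := hS s hs
  linarith [hc.1]

lemma Present_empty_late {S : Finset Pt} {τ' t : ℝ}
    (hS : ∀ s ∈ S, s.2.2 ≤ τ') (ht : τ' ≤ t) : Present S t = ∅ := by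
  apply Finset.filter_eq_empty_iff.mpr
  intro s hs hc
  have := hS s hs
  linarith [hc.2]

/-- `R` is an initial segment (in value order) of `T`. -/
def Down (T R : Finset Pt) : Prop :=
  R ⊆ T ∧ ∀ r ∈ T, ∀ q ∈ R, r.1 ≤ q.1 → r ∈ R

/-- `R` is a final segment (in value order) of `T`. -/
def Up (T R : Finset Pt) : Prop :=
  R ⊆ T ∧ ∀ r ∈ T, ∀ q ∈ R, q.1 ≤ r.1 → r ∈ R

lemma Down.insert_mem {T R : Finset Pt} {x : Pt} (h : Down T R)
    (hx : ∀ r ∈ T, x.1 < r.1) : Down (insert x T) (insert x R) := by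
  constructor
  · intro q hq
    rcases Finset.mem_insert.mp hq with h' | hq
    · rw [h']; exact Finset.mem_insert_self _ _
    · exact Finset.mem_insert_of_mem (h.1 hq)
  · intro r hr q hq hle
    rcases Finset.mem_insert.mp hr with h' | hr
    · rw [h']; exact Finset.mem_insert_self _ _
    · rcases Finset.mem_insert.mp hq with h' | hq
      · rw [h'] at hle; exact absurd hle (not_le.mpr (hx r hr))
      · exact Finset.mem_insert_of_mem (h.2 r hr q hq hle)

lemma Down.insert_env {T R : Finset Pt} {x : Pt} (h : Down T R)
    (hx : ∀ q ∈ R, q.1 < x.1) : Down (insert x T) R := by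
  constructor
  · exact h.1.trans (Finset.subset_insert _ _)
  · intro r hr q hq hle
    rcases Finset.mem_insert.mp hr with h' | hr
    · rw [h'] at hle; exact absurd hle (not_le.mpr (hx q hq))
    · exact h.2 r hr q hq hle

lemma Up.insert_mem {T R : Finset Pt} {x : Pt} (h : Up T R)
    (hx : ∀ r ∈ T, r.1 < x.1) : Up (insert x T) (insert x R) := by
  constructor
  · intro q hq
    rcases Finset.mem_insert.mp hq with h' | hq
    · rw [h']; exact Finset.mem_insert_self _ _
    · exact Finset.mem_insert_of_mem (h.1 hq)
  · intro r hr q hq hle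
    rcases Finset.mem_insert.mp hr with h' | hr
    · rw [h']; exact Finset.mem_insert_self _ _
    · rcases Finset.mem_insert.mp hq with h' | hq
      · rw [h'] at hle; exact absurd hle (not_le.mpr (hx r hr))
      · exact Finset.mem_insert_of_mem (h.2 r hr q hq hle)

lemma Up.insert_env {T R : Finset Pt} {x : Pt} (h : Up T R)
    (hx : ∀ q ∈ R, x.1 < q.1) : Up (insert x T) R := by
  constructor
  · exact h.1.trans (Finset.subset_insert _ _)
  · intro r hr q hq hle
    rcases Finset.mem_insert.mp hr with h' | hr
    · rw [h'] at hle; exact absurd hle (not_le.mpr (hx q hq))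
    · exact h.2 r hr q hq hle

set_option maxHeartbeats 2000000 in
/-- The main recursive gadget construction. For every `i, j ≥ 1` and every
value window `(α, β)` and time window `[σ, τ)` there is a dynamic point set
inside these windows such that every 2-coloring produces, at some time,
either a black initial run of length `i` or a white final run of length `j`. -/
lemma main : ∀ n i j : ℕ, i + j ≤ n → 1 ≤ i → 1 ≤ j →
    ∀ α β σ τ : ℝ, α < β → σ < τ →
    ∃ S : Finset Pt,
      (∀ s ∈ S, α < s.1 ∧ s.1 < β) ∧
      (∀ s ∈ S, σ ≤ s.2.1 ∧ s.2.1 ≤ s.2.2 ∧ s.2.2 ≤ τ) ∧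
      ∀ χ : Pt → Bool, ∃ t : ℝ, σ ≤ t ∧ t < τ ∧ ∃ R : Finset Pt,
        (R.card = i ∧ (∀ s ∈ R, χ s = true) ∧ Down (Present S t) R) ∨
        (R.card = j ∧ (∀ s ∈ R, χ s = false) ∧ Up (Present S t) R) := by
  intro n
  induction n with
  | zero => intro i j hij hi hj; omega
  | succ n ih =>
    intro i j hij hi hj α β σ τ hαβ hστ
    by_cases hi1 : i = 1
    · by_cases hj1 : j = 1
      · -- base case: a single point
        subst hi1; subst hj1
        refine ⟨{((α+β)/2, σ, τ)}, ?_, ?_, ?_⟩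
        · intro s hs
          rw [Finset.mem_singleton] at hs
          subst hs
          constructor <;> [linarith; linarith]
        · intro s hs
          rw [Finset.mem_singleton] at hs
          subst hs
          exact ⟨le_refl _, le_of_lt hστ, le_refl _⟩
        · intro χ
          refine ⟨σ, le_refl _, hστ, {((α+β)/2, σ, τ)}, ?_⟩
          have hP : Present ({((α+β)/2, σ, τ)} : Finset Pt) σ
              = {((α+β)/2, σ, τ)} := by
            rw [show ({((α+β)/2, σ, τ)} : Finset Pt)
                = insert ((α+β)/2, σ, τ) ∅ from rfl,
              Present_insert_alive _ (le_refl _) hστ]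
            rfl
          have hDU : Down (Present ({((α+β)/2, σ, τ)} : Finset Pt) σ)
                {((α+β)/2, σ, τ)} ∧
              Up (Present ({((α+β)/2, σ, τ)} : Finset Pt) σ)
                {((α+β)/2, σ, τ)} := by
            rw [hP]
            exact ⟨⟨Finset.Subset.refl _, fun r hr q hq _ => hr⟩,
              ⟨Finset.Subset.refl _, fun r hr q hq _ => hr⟩⟩
          cases hx : χ ((α+β)/2, σ, τ) with
          | true =>
            exact Or.inl ⟨Finset.card_singleton _,
              fun s hs => by rw [Finset.mem_singleton] at hs; rw [hs, hx],
              hDU.1⟩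
          | false =>
            exact Or.inr ⟨Finset.card_singleton _,
              fun s hs => by rw [Finset.mem_singleton] at hs; rw [hs, hx],
              hDU.2⟩
      · -- case i = 1, j ≥ 2
        subst hi1
        obtain ⟨j', rfl⟩ : ∃ j', j = j' + 1 := ⟨j - 1, by omega⟩
        have hj' : 1 ≤ j' := by omega
        set Δ : ℝ := (τ - σ)/2 with hΔdef
        have hΔ : 0 < Δ := by rw [hΔdef]; linarith
        have h2Δ : σ + 2*Δ = τ := by rw [hΔdef]; ring
        set m : ℝ := (α+β)/2 with hmdef
        obtain ⟨E, hEval, hEtime, hEχ⟩ :=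
          ih 1 j' (by omega) (le_refl _) hj' α m σ (σ + Δ)
            (by rw [hmdef]; linarith) (by linarith)
        set x : Pt := ((α + 3*β)/4, σ, τ) with hxdef
        refine ⟨insert x E, ?_, ?_, ?_⟩
        · intro s hs
          rcases Finset.mem_insert.mp hs with rfl | hs
          · constructor <;> [simp [hxdef]; simp [hxdef]] <;> linarith
          · have := hEval s hs
            constructor
            · exact this.1
            · rw [hmdef] at this; linarith [this.2]
        · intro s hs
          rcases Finset.mem_insert.mp hs with rfl | hs
          · exact ⟨le_refl _, le_of_lt hστ, le_refl _⟩
          · have := hEtime s hs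
            exact ⟨this.1, this.2.1, by linarith [this.2.2]⟩
        · intro χ
          cases hx : χ x with
          | false =>
            obtain ⟨t, ht1, ht2, R, hR⟩ := hEχ χ
            have hxt : Present (insert x E) t = insert x (Present E t) :=
              Present_insert_alive E (by simp [hxdef]; linarith)
                (by simp [hxdef]; linarith)
            refine ⟨t, ht1, by linarith, ?_⟩
            rcases hR with ⟨hcard, hmono, hdown⟩ | ⟨hcard, hmono, hup⟩
            · refine ⟨R, Or.inl ⟨hcard, hmono, ?_⟩⟩
              rw [hxt]
              refine hdown.insert_env ?_
              intro q hq
              have hqE := hEval q (Present_subset E t (hdown.1 hq))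
              simp only [hxdef]
              rw [hmdef] at hqE; linarith [hqE.2]
            · refine ⟨insert x R, Or.inr ⟨?_, ?_, ?_⟩⟩
              · rw [Finset.card_insert_of_notMem, hcard]
                intro hxR
                have := hEval x (Present_subset E t (hup.1 hxR))
                rw [hmdef] at this
                simp only [hxdef] at this
                linarith [this.2]
              · intro s hs
                rcases Finset.mem_insert.mp hs with rfl | hs
                · exact hx
                · exact hmono s hs
              · rw [hxt]
                refine hup.insert_mem ?_
                intro r hr
                have := hEval r (Present_subset E t hr)
                rw [hmdef] at this
                simp only [hxdef]
                linarith [this.2]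
          | true =>
            refine ⟨σ + Δ, by linarith, by linarith, {x}, ?_⟩
            have hEempty : Present E (σ + Δ) = ∅ :=
              Present_empty_late (fun s hs => (hEtime s hs).2.2) (le_refl _)
            have hP : Present (insert x E) (σ + Δ) = {x} := by
              rw [Present_insert_alive E (by simp [hxdef]; linarith)
                (by simp [hxdef]; linarith), hEempty]
              rfl
            refine Or.inl ⟨Finset.card_singleton _, ?_, ?_⟩
            · intro s hs
              rw [Finset.mem_singleton] at hs
              rw [hs, hx]
            · rw [hP]
              exact ⟨Finset.Subset.refl _, fun r hr q hq _ => hr⟩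
    · by_cases hj1 : j = 1
      · -- case i ≥ 2, j = 1
        subst hj1
        obtain ⟨i', rfl⟩ : ∃ i', i = i' + 1 := ⟨i - 1, by omega⟩
        have hi' : 1 ≤ i' := by omega
        set Δ : ℝ := (τ - σ)/2 with hΔdef
        have hΔ : 0 < Δ := by rw [hΔdef]; linarith
        have h2Δ : σ + 2*Δ = τ := by rw [hΔdef]; ring
        set m : ℝ := (α+β)/2 with hmdef
        obtain ⟨D, hDval, hDtime, hDχ⟩ :=
          ih i' 1 (by omega) hi' (le_refl _) m β σ (σ + Δ)
            (by rw [hmdef]; linarith) (by linarith)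
        set z : Pt := ((3*α + β)/4, σ, τ) with hzdef
        refine ⟨insert z D, ?_, ?_, ?_⟩
        · intro s hs
          rcases Finset.mem_insert.mp hs with rfl | hs
          · constructor <;> [simp [hzdef]; simp [hzdef]] <;> linarith
          · have := hDval s hs
            rw [hmdef] at this
            exact ⟨by linarith [this.1], this.2⟩
        · intro s hs
          rcases Finset.mem_insert.mp hs with rfl | hs
          · exact ⟨le_refl _, le_of_lt hστ, le_refl _⟩
          · have := hDtime s hs
            exact ⟨this.1, this.2.1, by linarith [this.2.2]⟩
        · intro χ
          cases hz : χ z with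
          | true =>
            obtain ⟨t, ht1, ht2, R, hR⟩ := hDχ χ
            have hzt : Present (insert z D) t = insert z (Present D t) :=
              Present_insert_alive D (by simp [hzdef]; linarith)
                (by simp [hzdef]; linarith)
            refine ⟨t, ht1, by linarith, ?_⟩
            rcases hR with ⟨hcard, hmono, hdown⟩ | ⟨hcard, hmono, hup⟩
            · refine ⟨insert z R, Or.inl ⟨?_, ?_, ?_⟩⟩
              · rw [Finset.card_insert_of_notMem, hcard]
                intro hzR
                have := hDval z (Present_subset D t (hdown.1 hzR))
                rw [hmdef] at this
                simp only [hzdef] at this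
                linarith [this.1]
              · intro s hs
                rcases Finset.mem_insert.mp hs with rfl | hs
                · exact hz
                · exact hmono s hs
              · rw [hzt]
                refine hdown.insert_mem ?_
                intro r hr
                have := hDval r (Present_subset D t hr)
                rw [hmdef] at this
                simp only [hzdef]
                linarith [this.1]
            · refine ⟨R, Or.inr ⟨hcard, hmono, ?_⟩⟩
              rw [hzt]
              refine hup.insert_env ?_
              intro q hq
              have := hDval q (Present_subset D t (hup.1 hq))
              rw [hmdef] at this
              simp only [hzdef]
              linarith [this.1]
          | false =>
            refine ⟨σ + Δ, by linarith, by linarith, {z}, ?_⟩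
            have hDempty : Present D (σ + Δ) = ∅ :=
              Present_empty_late (fun s hs => (hDtime s hs).2.2) (le_refl _)
            have hP : Present (insert z D) (σ + Δ) = {z} := by
              rw [Present_insert_alive D (by simp [hzdef]; linarith)
                (by simp [hzdef]; linarith), hDempty]
              rfl
            refine Or.inr ⟨Finset.card_singleton _, ?_, ?_⟩
            · intro s hs
              rw [Finset.mem_singleton] at hs
              rw [hs, hz]
            · rw [hP]
              exact ⟨Finset.Subset.refl _, fun r hr q hq _ => hr⟩
      · -- main case: i ≥ 2, j ≥ 2
        obtain ⟨i', rfl⟩ : ∃ i', i = i' + 1 := ⟨i - 1, by omega⟩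
        obtain ⟨j', rfl⟩ : ∃ j', j = j' + 1 := ⟨j - 1, by omega⟩
        have hi' : 1 ≤ i' := by omega
        have hj' : 1 ≤ j' := by omega
        set δ : ℝ := (β - α)/5 with hδdef
        have hδ : 0 < δ := by rw [hδdef]; linarith
        have h5δ : α + 5*δ = β := by rw [hδdef]; ring
        set Δ : ℝ := (τ - σ)/3 with hΔdef
        have hΔ : 0 < Δ := by rw [hΔdef]; linarith
        have h3Δ : σ + 3*Δ = τ := by rw [hΔdef]; ring
        obtain ⟨E, hEval, hEtime, hEχ⟩ :=
          ih (i'+1) j' (by omega) (by omega) hj'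
            α (α + δ) σ (σ + Δ) (by linarith) (by linarith)
        obtain ⟨A, hAval, hAtime, hAχ⟩ :=
          ih i' j' (by omega) hi' hj'
            (α + 2*δ) (α + 3*δ) (σ + Δ) (σ + 2*Δ) (by linarith) (by linarith)
        obtain ⟨D, hDval, hDtime, hDχ⟩ :=
          ih i' (j'+1) (by omega) hi' (by omega)
            (α + 4*δ) β (σ + 2*Δ) τ (by linarith) (by linarith)
        set x : Pt := (α + 3*δ/2, σ, σ + 2*Δ) with hxdef
        set z : Pt := (α + 7*δ/2, σ + Δ, τ) with hzdef
        refine ⟨insert x (insert z (E ∪ (A ∪ D))), ?_, ?_, ?_⟩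
        · intro s hs
          rcases Finset.mem_insert.mp hs with rfl | hs
          · constructor <;> simp [hxdef] <;> linarith
          rcases Finset.mem_insert.mp hs with rfl | hs
          · constructor <;> simp [hzdef] <;> linarith
          rcases Finset.mem_union.mp hs with hs | hs
          · have := hEval s hs
            exact ⟨this.1, by linarith [this.2]⟩
          rcases Finset.mem_union.mp hs with hs | hs
          · have := hAval s hs
            exact ⟨by linarith [this.1], by linarith [this.2]⟩
          · have := hDval s hs
            exact ⟨by linarith [this.1], this.2⟩
        · intro s hs
          rcases Finset.mem_insert.mp hs with rfl | hs
          · refine ⟨le_refl _, by simp [hxdef]; linarith, by simp [hxdef]; linarith⟩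
          rcases Finset.mem_insert.mp hs with rfl | hs
          · refine ⟨by simp [hzdef]; linarith, by simp [hzdef]; linarith, le_refl _⟩
          rcases Finset.mem_union.mp hs with hs | hs
          · have := hEtime s hs
            exact ⟨this.1, this.2.1, by linarith [this.2.2]⟩
          rcases Finset.mem_union.mp hs with hs | hs
          · have := hAtime s hs
            exact ⟨by linarith [this.1], this.2.1, by linarith [this.2.2]⟩
          · have := hDtime s hs
            exact ⟨by linarith [this.1], this.2.1, this.2.2⟩
        · intro χ
          cases hx : χ x with
          | false =>
            -- use gadget E in the first time window, sentinel x present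
            obtain ⟨t, ht1, ht2, R, hR⟩ := hEχ χ
            have hAempty : Present A t = ∅ :=
              Present_empty_early (fun s hs => (hAtime s hs).1) ht2
            have hDempty : Present D t = ∅ :=
              Present_empty_early (fun s hs => (hDtime s hs).1)
                (by linarith)
            have hP : Present (insert x (insert z (E ∪ (A ∪ D)))) t
                = insert x (Present E t) := by
              rw [Present_insert_alive _ (by simp [hxdef]; linarith)
                  (by simp [hxdef]; linarith),
                Present_insert_dead _
                  (by simp [hzdef]; intro h; linarith),
                Present_union, Present_union, hAempty, hDempty]
              simp
            refine ⟨t, ht1, by linarith, ?_⟩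
            rcases hR with ⟨hcard, hmono, hdown⟩ | ⟨hcard, hmono, hup⟩
            · refine ⟨R, Or.inl ⟨hcard, hmono, ?_⟩⟩
              rw [hP]
              refine hdown.insert_env ?_
              intro q hq
              have := hEval q (Present_subset E t (hdown.1 hq))
              simp only [hxdef]
              linarith [this.2]
            · refine ⟨insert x R, Or.inr ⟨?_, ?_, ?_⟩⟩
              · rw [Finset.card_insert_of_notMem, hcard]
                intro hxR
                have := hEval x (Present_subset E t (hup.1 hxR))
                simp only [hxdef] at this
                linarith [this.2]
              · intro s hs
                rcases Finset.mem_insert.mp hs with rfl | hs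
                · exact hx
                · exact hmono s hs
              · rw [hP]
                refine hup.insert_mem ?_
                intro r hr
                have := hEval r (Present_subset E t hr)
                simp only [hxdef]
                linarith [this.2]
          | true =>
            cases hz : χ z with
            | true =>
              -- use gadget D in the last time window, sentinel z present
              obtain ⟨t, ht1, ht2, R, hR⟩ := hDχ χ
              have hEempty : Present E t = ∅ :=
                Present_empty_late (fun s hs => (hEtime s hs).2.2)
                  (by linarith)
              have hAempty : Present A t = ∅ :=
                Present_empty_late (fun s hs => (hAtime s hs).2.2) ht1
              have hP : Present (insert x (insert z (E ∪ (A ∪ D)))) t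
                  = insert z (Present D t) := by
                rw [Present_insert_dead _
                    (by simp [hxdef]; intro h; linarith),
                  Present_insert_alive _ (by simp [hzdef]; linarith)
                    (by simp [hzdef]; linarith),
                  Present_union, Present_union, hEempty, hAempty]
                simp
              refine ⟨t, by linarith, ht2, ?_⟩
              rcases hR with ⟨hcard, hmono, hdown⟩ | ⟨hcard, hmono, hup⟩
              · refine ⟨insert z R, Or.inl ⟨?_, ?_, ?_⟩⟩
                · rw [Finset.card_insert_of_notMem, hcard]
                  intro hzR
                  have := hDval z (Present_subset D t (hdown.1 hzR))
                  simp only [hzdef] at this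
                  linarith [this.1]
                · intro s hs
                  rcases Finset.mem_insert.mp hs with rfl | hs
                  · exact hz
                  · exact hmono s hs
                · rw [hP]
                  refine hdown.insert_mem ?_
                  intro r hr
                  have := hDval r (Present_subset D t hr)
                  simp only [hzdef]
                  linarith [this.1]
              · refine ⟨R, Or.inr ⟨hcard, hmono, ?_⟩⟩
                rw [hP]
                refine hup.insert_env ?_
                intro q hq
                have := hDval q (Present_subset D t (hup.1 hq))
                simp only [hzdef]
                linarith [this.1]
            | false =>
              -- use gadget A in the middle window, both sentinels present
              obtain ⟨t, ht1, ht2, R, hR⟩ := hAχ χ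
              have hEempty : Present E t = ∅ :=
                Present_empty_late (fun s hs => (hEtime s hs).2.2) ht1
              have hDempty : Present D t = ∅ :=
                Present_empty_early (fun s hs => (hDtime s hs).1) ht2
              have hP : Present (insert x (insert z (E ∪ (A ∪ D)))) t
                  = insert x (insert z (Present A t)) := by
                rw [Present_insert_alive _ (by simp [hxdef]; linarith)
                    (by simp [hxdef]; linarith),
                  Present_insert_alive _ (by simp [hzdef]; linarith)
                    (by simp [hzdef]; linarith),
                  Present_union, Present_union, hEempty, hDempty]
                simp
              refine ⟨t, by linarith, by linarith, ?_⟩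
              have hRvals : ∀ q ∈ Present A t,
                  α + 2*δ < q.1 ∧ q.1 < α + 3*δ :=
                fun q hq => hAval q (Present_subset A t hq)
              rcases hR with ⟨hcard, hmono, hdown⟩ | ⟨hcard, hmono, hup⟩
              · refine ⟨insert x R, Or.inl ⟨?_, ?_, ?_⟩⟩
                · rw [Finset.card_insert_of_notMem, hcard]
                  intro hxR
                  have := hRvals x (hdown.1 hxR)
                  simp only [hxdef] at this
                  linarith [this.1]
                · intro s hs
                  rcases Finset.mem_insert.mp hs with rfl | hs
                  · exact hx
                  · exact hmono s hs
                · rw [hP]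
                  have h1 : Down (insert z (Present A t)) R :=
                    hdown.insert_env (fun q hq => by
                      have := hRvals q (hdown.1 hq)
                      simp only [hzdef]
                      linarith [this.2])
                  refine h1.insert_mem ?_
                  intro r hr
                  rcases Finset.mem_insert.mp hr with rfl | hr
                  · simp only [hxdef, hzdef]; linarith
                  · have := hRvals r hr
                    simp only [hxdef]
                    linarith [this.1]
              · refine ⟨insert z R, Or.inr ⟨?_, ?_, ?_⟩⟩
                · rw [Finset.card_insert_of_notMem, hcard]
                  intro hzR
                  have := hRvals z (hup.1 hzR)
                  simp only [hzdef] at this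
                  linarith [this.2]
                · intro s hs
                  rcases Finset.mem_insert.mp hs with rfl | hs
                  · exact hz
                  · exact hmono s hs
                · rw [hP]
                  have h1 : Up (insert z (Present A t)) (insert z R) :=
                    hup.insert_mem (fun r hr => by
                      have := hRvals r hr
                      simp only [hzdef]
                      linarith [this.2])
                  refine h1.insert_env ?_
                  intro q hq
                  rcases Finset.mem_insert.mp hq with rfl | hq
                  · simp only [hxdef, hzdef]; linarith
                  · have := hRvals q (hup.1 hq)
                    simp only [hxdef]
                    linarith [this.1]

end DynAux

/-- For every `p ≥ 1` there is a dynamic point set such that every 2-coloring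
leaves, at some time `t`, `p` consecutive present points monochromatic. -/
theorem dynamic_two_coloring_impossible (p : ℕ) (hp : 0 < p) :
    ∃ S : Finset (ℝ × ℝ × ℝ),
      (∀ s ∈ S, s.2.1 ≤ s.2.2) ∧
      ∀ χ : (ℝ × ℝ × ℝ) → Bool, ∃ t : ℝ, ∃ C : Finset (ℝ × ℝ × ℝ),
        ConsecIn (Present S t) C ∧ C.card = p ∧ ∃ c : Bool, ∀ s ∈ C, χ s = c := by
  obtain ⟨S, hval, htime, hχ⟩ :=
    DynAux.main (p + p) p p (le_refl _) hp hp 0 1 0 1 (by norm_num) (by norm_num)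
  refine ⟨S, fun s hs => (htime s hs).2.1, ?_⟩
  intro χ
  obtain ⟨t, _, _, R, hR⟩ := hχ χ
  rcases hR with ⟨hcard, hmono, hdown⟩ | ⟨hcard, hmono, hup⟩
  · exact ⟨t, R, ⟨hdown.1, fun a ha b hb r hr h1 h2 => hdown.2 r hr b hb h2⟩,
      hcard, true, hmono⟩
  · exact ⟨t, R, ⟨hup.1, fun a ha b hb r hr h1 h2 => hup.2 r hr a ha h1⟩,
      hcard, false, hmono⟩
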